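/- Let α, β, K > 0, f ∈ ℝⁿ, let L be a symmetric n×n matrix with K·I + L positive definite, and let u₀ be a critical point of J(u) = -(1/2)⟨u, Lu⟩ + (α/2)∑ᵢ(uᵢ² - β)² - ⟨u,f⟩. With v̂₀* = α(u₀⊙u₀ - β𝟙), v̂₁* = (2v̂₀* + K𝟙)⊙u₀ - f, assuming 2(v̂₀*)ᵢ + K > 0 for all i, define the dual functional J*(v₁*, v₀*) = -(1/2)∑ᵢ (v₁*ᵢ + fᵢ)²/(2v₀*ᵢ + K) - (1/(2α))∑ᵢ (v₀*ᵢ)² - β∑ᵢ v₀*ᵢ + (1/2)⟨v₁*, (K·I + L)⁻¹ v₁*⟩. Then J*(v̂₁*, v̂₀*) = J(u₀) (zero duality gap at the critical point). -/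

import Mathlib

open Matrix

/-- Zero duality gap at a critical point: with the dual variables
`v̂₀* = α(u₀⊙u₀ - β𝟙)`, `v̂₁* = (2v̂₀* + K𝟙)⊙u₀ - f`, the dual functional
`J*(v₁*,v₀*) = -(1/2)∑(v₁*ᵢ+fᵢ)²/(2v₀*ᵢ+K) - (1/(2α))∑(v₀*ᵢ)² - β∑v₀*ᵢ
 + (1/2)⟨v₁*,(KI+L)⁻¹v₁*⟩` satisfies `J*(v̂₁*,v̂₀*) = J(u₀)`. -/
theorem zero_duality_gap_at_critical_point (n : ℕ) (α β K : ℝ)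
    (hα : 0 < α) (hβ : 0 < β) (hK : 0 < K)
    (f u₀ : Fin n → ℝ) (L : Matrix (Fin n) (Fin n) ℝ) (hL : L.IsSymm)
    (hpos : (K • (1 : Matrix (Fin n) (Fin n) ℝ) + L).PosDef)
    (J : (Fin n → ℝ) → ℝ)
    (hJ : ∀ u, J u = -(1 / 2) * (u ⬝ᵥ L.mulVec u)
        + (α / 2) * ∑ i, ((u i) ^ 2 - β) ^ 2 - u ⬝ᵥ f)
    (hcrit : ∀ i, -(L.mulVec u₀) i + 2 * α * ((u₀ i) ^ 2 - β) * u₀ i - f i = 0)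
    (v₀h v₁h : Fin n → ℝ)
    (hv₀ : ∀ i, v₀h i = α * ((u₀ i) ^ 2 - β))
    (hv₁ : ∀ i, v₁h i = (2 * v₀h i + K) * u₀ i - f i)
    (hA : ∀ i, 0 < 2 * v₀h i + K)
    (Jstar : (Fin n → ℝ) → (Fin n → ℝ) → ℝ)
    (hJstar : ∀ v₁ v₀, Jstar v₁ v₀ =
        -(1 / 2) * ∑ i, (v₁ i + f i) ^ 2 / (2 * v₀ i + K)
        - (1 / (2 * α)) * ∑ i, (v₀ i) ^ 2 - β * ∑ i, v₀ i
        + (1 / 2) * (v₁ ⬝ᵥ (K • (1 : Matrix (Fin n) (Fin n) ℝ) + L)⁻¹.mulVec v₁)) :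
    Jstar v₁h v₀h = J u₀ := by
  have hLu : ∀ i, L.mulVec u₀ i = 2 * v₀h i * u₀ i - f i := by
    intro i
    have := hcrit i
    rw [hv₀]
    linarith
  set M := K • (1 : Matrix (Fin n) (Fin n) ℝ) + L with hMdef
  have hMu : M.mulVec u₀ = v₁h := by
    funext i
    have : M.mulVec u₀ i = K * u₀ i + L.mulVec u₀ i := by
      simp [hMdef, Matrix.add_mulVec, Matrix.smul_mulVec, Matrix.one_mulVec]
    rw [this, hLu i, hv₁]
    ring
  have hdet : IsUnit M.det := isUnit_iff_ne_zero.mpr hpos.det_pos.ne'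
  have hinv : M⁻¹.mulVec v₁h = u₀ := by
    rw [← hMu, Matrix.mulVec_mulVec, Matrix.nonsing_inv_mul M hdet, Matrix.one_mulVec]
  rw [hJstar, hJ, hinv]
  simp only [dotProduct]
  have h1 : ∀ i ∈ Finset.univ, (v₁h i + f i) ^ 2 / (2 * v₀h i + K)
      = (2 * v₀h i + K) * u₀ i ^ 2 := by
    intro i _
    rw [hv₁]
    have h := (hA i).ne'
    field_simp
    ring
  rw [Finset.sum_congr rfl h1]
  have h2 : ∀ i ∈ Finset.univ, u₀ i * L.mulVec u₀ i
      = 2 * v₀h i * u₀ i ^ 2 - u₀ i * f i := by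
    intro i _
    rw [hLu i]; ring
  rw [Finset.sum_congr rfl h2]
  have h3 : ∀ i ∈ Finset.univ, v₁h i * u₀ i
      = (2 * v₀h i + K) * u₀ i ^ 2 - f i * u₀ i := by
    intro i _
    rw [hv₁]; ring
  rw [Finset.sum_congr rfl h3]
  simp only [Finset.mul_sum, ← Finset.sum_add_distrib, ← Finset.sum_sub_distrib]
  apply Finset.sum_congr rfl
  intro i _
  have hv := hv₀ i
  have hαne := hα.ne'
  field_simp [hv]
  rw [hv]; ring
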